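/- Let K₂ = ℂ[[t,s]][1/(ts)] with a = t−s, and let Q = ℂ((a)). The expansion map E : K₂[a⁻¹] → Q((t)) × Q((s)), defined componentwise by expanding an element as a Laurent series in t (inverting s = t−a, which is invertible in Q((t))) and as a Laurent series in s respectively, is an injective ring homomorphism. -/

import Mathlib

noncomputable section

/-- `A = ℂ[[a]]`. -/
abbrev AA : Type := PowerSeries ℂ

/-- `Q = ℂ((a))`. -/
abbrev QQ : Type := LaurentSeries ℂ

/-- `ℂ[[t,s]]`, realized as `ℂ[[a]][[t]]` via `a = t − s` (so `s = t − a`). -/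
abbrev BB : Type := PowerSeries AA

/-- The variable `a`. -/
def aa : AA := PowerSeries.X

/-- The variable `t`. -/
def tt : BB := PowerSeries.X

/-- The variable `s = t − a`. -/
def ss : BB := tt - PowerSeries.C (R := AA) aa

/-- `K₂[a⁻¹] = ℂ[[t,s]][1/(ts), 1/a]`. -/
abbrev LL : Type := Localization.Away (tt * ss * PowerSeries.C (R := AA) aa)

/-- The inclusion `ℂ[[a]] → ℂ((a))`. -/
def ι : AA →+* QQ := HahnSeries.ofPowerSeries ℤ ℂ

/-- the expansion map `E = (E_t, E_s) : K₂[a⁻¹] → Q((t)) × Q((s))` is an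
injective ring homomorphism.  Here `E_t` is (the localized extension of) the canonical
inclusion `ℂ[[a]][[t]] → Q((t))`, and `E_s` is (the localized extension of) the
continuous `A`-algebra map sending `t` to `s + a`; these properties characterize the
pair, and any pair of ring homomorphisms satisfying them is injective as a map to the
product. -/
theorem stmt1
    (Et : LL →+* LaurentSeries QQ)
    (hEt : ∀ f : BB,
      Et (algebraMap BB LL f) =
        HahnSeries.ofPowerSeries ℤ QQ (PowerSeries.map ι f))
    (Es : LL →+* LaurentSeries QQ)
    (hEsC : ∀ c : AA,
      Es (algebraMap BB LL (PowerSeries.C (R := AA) c)) = HahnSeries.C (ι c))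
    (hEst : Es (algebraMap BB LL tt) = HahnSeries.single 1 1 + HahnSeries.C (ι aa))
    (hEscont : ∀ (m : ℕ) (f : BB), ∃ g : PowerSeries QQ,
      Es (algebraMap BB LL ((tt * ss) ^ m * f)) =
        HahnSeries.ofPowerSeries ℤ QQ (PowerSeries.X ^ m * g)) :
    Function.Injective (fun x : LL => (Et x, Es x)) := by
  have hι : Function.Injective ι := HahnSeries.ofPowerSeries_injective
  have key : ∀ x : LL, Et x = 0 → x = 0 := by
    intro x hx
    obtain ⟨n, f, hf⟩ := IsLocalization.Away.surj (S := LL)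
      (tt * ss * PowerSeries.C (R := AA) aa) x
    have h0 : Et (algebraMap BB LL f) = 0 := by
      have h1 : Et (algebraMap BB LL f)
          = Et x * Et ((algebraMap BB LL) (tt * ss * PowerSeries.C (R := AA) aa) ^ n) := by
        rw [← map_mul, hf]
      rw [h1, hx]
      set z := Et ((algebraMap BB LL) (tt * ss * PowerSeries.C (R := AA) aa) ^ n) with hz
      exact zero_mul z
    rw [hEt] at h0
    have hmf : PowerSeries.map ι f = 0 :=
      HahnSeries.ofPowerSeries_injective (Γ := ℤ) (R := QQ)
        (h0.trans (map_zero _).symm)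
    have hf0 : f = 0 := by
      ext k
      have := congrArg (PowerSeries.coeff (R := QQ) k) hmf
      rw [PowerSeries.coeff_map] at this
      have h0' : ι ((PowerSeries.coeff (R := AA) k) f) = ι 0 := by simpa using this
      rw [hι h0']
      simp
    have hunit : IsUnit (algebraMap BB LL ((tt * ss * PowerSeries.C (R := AA) aa) ^ n)) :=
      IsLocalization.map_units LL
        (⟨(tt * ss * PowerSeries.C (R := AA) aa) ^ n, ⟨n, rfl⟩⟩ :
          Submonoid.powers (tt * ss * PowerSeries.C (R := AA) aa))
    have hz : x * algebraMap BB LL ((tt * ss * PowerSeries.C (R := AA) aa) ^ n) = 0 := by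
      rw [map_pow, hf, hf0, map_zero]
    exact (hunit.mul_left_eq_zero).mp hz
  intro x y hxy
  have h1 : Et x = Et y := congrArg Prod.fst hxy
  have h2 : Et (x - y) = 0 := by rw [map_sub, h1, sub_self]
  exact sub_eq_zero.mp (key _ h2)

end
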